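/- Let f ∈ [0, 1] and let ρ_w be the two-qubit Werner state, i.e., the Bell-diagonal state ρ_γ with γ = ((1−f)/3, (1−f)/3, (1−f)/3, f). Then the Bures discord of response of ρ_w, namely the infimum over all traceless 2 × 2 unitary matrices U of 1 − √F(ρ_w, (U ⊗ₖ I_2) ρ_w (U ⊗ₖ I_2)ᴴ), equals 1 − (2/3)(1 − f) − (2/√3)·√(f(1 − f)). -/

import Mathlib

open Matrix Kronecker
open scoped ComplexOrder

open scoped Classical MatrixOrder in
/-- The positive semidefinite square root of a matrix (junk value `0` if not PSD). -/
noncomputable def msqrt {n : Type*} [Fintype n] [DecidableEq n] (A : Matrix n n ℂ) : Matrix n n ℂ :=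
  if h : A.PosSemidef then CFC.sqrt A else 0

/-- Square-root fidelity `tr √(√ρ · σ · √ρ)` (as a real number). -/
noncomputable def sqrtFid {n : Type*} [Fintype n] [DecidableEq n] (ρ σ : Matrix n n ℂ) : ℝ :=
  ((msqrt (msqrt ρ * σ * msqrt ρ)).trace).re

/-- Trace norm `tr √(Xᴴ X)` (as a real number). -/
noncomputable def traceNorm {n : Type*} [Fintype n] [DecidableEq n] (X : Matrix n n ℂ) : ℝ :=
  ((msqrt (Xᴴ * X)).trace).re

/-- The Bell-diagonal two-qubit state with Bell-basis eigenvalues `γ₁, γ₂, γ₃, γ₄`. -/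
noncomputable def bellDiag (γ₁ γ₂ γ₃ γ₄ : ℝ) :
    Matrix (Fin 2 × Fin 2) (Fin 2 × Fin 2) ℂ :=
  Matrix.reindex finProdFinEquiv.symm finProdFinEquiv.symm
    ((1 / 2 : ℂ) • !![(γ₁ : ℂ) + γ₂, 0, 0, (γ₁ : ℂ) - γ₂;
        0, (γ₃ : ℂ) + γ₄, (γ₃ : ℂ) - γ₄, 0;
        0, (γ₃ : ℂ) - γ₄, (γ₃ : ℂ) + γ₄, 0;
        (γ₁ : ℂ) - γ₂, 0, 0, (γ₁ : ℂ) + γ₂])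

section Aux

set_option linter.unusedSectionVars false

open scoped MatrixOrder in
lemma msqrt_eq {n : Type*} [Fintype n] [DecidableEq n] {A S : Matrix n n ℂ}
    (hS : S.PosSemidef) (h : S * S = A) : msqrt A = S := by
  have hA : A.PosSemidef := by
    have := Matrix.posSemidef_conjTranspose_mul_self S
    rwa [hS.1, h] at this
  rw [msqrt, dif_pos hA]
  exact CFC.sqrt_unique h hS.nonneg

variable {n : Type*} [Fintype n] [DecidableEq n]

lemma mul_vecMulVec (M : Matrix n n ℂ) (u v : n → ℂ) :
    M * vecMulVec u v = vecMulVec (M.mulVec u) v := by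
  ext i j
  simp only [mul_apply, vecMulVec_apply, mulVec, dotProduct, Finset.sum_mul]
  exact Finset.sum_congr rfl fun k _ => by ring

lemma vecMulVec_mul_vecMulVec (u v w x : n → ℂ) :
    vecMulVec u v * vecMulVec w x = (v ⬝ᵥ w) • vecMulVec u x := by
  ext i j
  simp only [mul_apply, vecMulVec_apply, Matrix.smul_apply, dotProduct, smul_eq_mul,
    Finset.sum_mul, Finset.mul_sum]
  exact Finset.sum_congr rfl fun k _ => by ring

lemma vecMulVec_conjT (u v : n → ℂ) :
    (vecMulVec u v)ᴴ = vecMulVec (star v) (star u) := by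
  ext i j
  simp [vecMulVec_apply, conjTranspose_apply, mul_comm]

lemma trace_vecMulVec (u v : n → ℂ) : (vecMulVec u v).trace = u ⬝ᵥ v := by
  simp [trace, vecMulVec_apply, dotProduct, diag]

/-- if `Q` is a Hermitian idempotent and `0 ≤ c` then `c • Q` is PSD. -/
lemma psd_smul_proj {Q : Matrix n n ℂ} (hherm : Qᴴ = Q) (hidem : Q * Q = Q)
    {c : ℝ} (hc : 0 ≤ c) : ((c : ℂ) • Q).PosSemidef := by
  have : (c : ℂ) • Q = ((Real.sqrt c : ℂ) • Q)ᴴ * ((Real.sqrt c : ℂ) • Q) := by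
    rw [conjTranspose_smul, hherm, smul_mul_assoc, mul_smul_comm, hidem, smul_smul]
    congr 1
    rw [Complex.star_def, Complex.conj_ofReal, ← Complex.ofReal_mul, Real.mul_self_sqrt hc]
  rw [this]
  exact Matrix.posSemidef_conjTranspose_mul_self _

end Aux

noncomputable def ψv : Fin 2 × Fin 2 → ℂ := fun p =>
  if p = (0,1) then (Real.sqrt 2 : ℂ)⁻¹ else if p = (1,0) then -(Real.sqrt 2 : ℂ)⁻¹ else 0

noncomputable def Pm : Matrix (Fin 2 × Fin 2) (Fin 2 × Fin 2) ℂ := vecMulVec ψv (star ψv)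

lemma sqrt2_sq : ((Real.sqrt 2 : ℝ) : ℂ) * ((Real.sqrt 2 : ℝ) : ℂ) = 2 := by
  norm_cast
  rw [Real.mul_self_sqrt (by norm_num)]

lemma dot_psi : star ψv ⬝ᵥ ψv = 1 := by
  simp [dotProduct, Fintype.sum_prod_type, Fin.sum_univ_two, ψv, Pi.star_apply]
  rw [← mul_inv, sqrt2_sq]
  norm_num

lemma psi_dot : ψv ⬝ᵥ star ψv = 1 := by
  rw [dotProduct_comm]; exact dot_psi

lemma Pm_entries (i j : Fin 2 × Fin 2) : Pm i j =
    (if i = (0,1) then (1:ℂ) else if i = (1,0) then -1 else 0) *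
    (if j = (0,1) then (1:ℂ) else if j = (1,0) then -1 else 0) / 2 := by
  have h : ((Real.sqrt 2 : ℝ) : ℂ)⁻¹ * ((Real.sqrt 2 : ℝ) : ℂ)⁻¹ = 1/2 := by
    rw [← mul_inv, sqrt2_sq]; norm_num
  obtain ⟨i1,i2⟩ := i; obtain ⟨j1,j2⟩ := j
  fin_cases i1 <;> fin_cases i2 <;> fin_cases j1 <;> fin_cases j2 <;>
    simp [Pm, vecMulVec_apply, ψv, Pi.star_apply, Prod.ext_iff, h, map_inv₀,
      Complex.conj_ofReal] <;>
    norm_num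

lemma bell_decomp (a f : ℝ) :
    bellDiag a a a f = (a : ℂ) • 1 + ((f : ℂ) - a) • Pm := by
  ext ⟨i1,i2⟩ ⟨j1,j2⟩
  fin_cases i1 <;> fin_cases i2 <;> fin_cases j1 <;> fin_cases j2 <;>
    simp [bellDiag, finProdFinEquiv, Pm_entries, Matrix.one_apply, Prod.ext_iff,
      vecHead, vecTail] <;> ring

lemma Pm_herm : Pmᴴ = Pm := by
  rw [Pm, vecMulVec_conjT, star_star]

lemma Pm_idem : Pm * Pm = Pm := by
  rw [Pm, _root_.vecMulVec_mul_vecMulVec, dot_psi, one_smul]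

lemma trace_Pm : Pm.trace = 1 := by
  rw [Pm, _root_.trace_vecMulVec, psi_dot]

lemma kron_one_conjT (U : Matrix (Fin 2) (Fin 2) ℂ) :
    (U ⊗ₖ (1 : Matrix (Fin 2) (Fin 2) ℂ))ᴴ = Uᴴ ⊗ₖ 1 := by
  ext ⟨i,j⟩ ⟨k,l⟩
  rcases eq_or_ne j l with h | h
  · subst h; simp [conjTranspose_apply, Matrix.one_apply]
  · simp [conjTranspose_apply, Matrix.one_apply, h, Ne.symm h]

lemma orth_psi (U : Matrix (Fin 2) (Fin 2) ℂ) (ht : U.trace = 0) :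
    star ψv ⬝ᵥ (U ⊗ₖ (1 : Matrix (Fin 2) (Fin 2) ℂ)).mulVec ψv = 0 := by
  have ht2 : U 0 0 + U 1 1 = 0 := by rwa [Matrix.trace_fin_two] at ht
  simp [dotProduct, Matrix.mulVec, Fintype.sum_prod_type, Fin.sum_univ_two,
    Matrix.one_apply, ψv, Prod.ext_iff, Pi.star_apply, map_inv₀, Complex.conj_ofReal]
  linear_combination (((Real.sqrt 2 : ℝ) : ℂ)⁻¹ * ((Real.sqrt 2 : ℝ) : ℂ)⁻¹) * ht2

lemma fid_const (f : ℝ) (hf0 : 0 ≤ f) (hf1 : f ≤ 1)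
    (U : Matrix (Fin 2) (Fin 2) ℂ) (hU : Uᴴ * U = 1) (ht : U.trace = 0) :
    sqrtFid (bellDiag ((1 - f) / 3) ((1 - f) / 3) ((1 - f) / 3) f)
      ((U ⊗ₖ (1 : Matrix (Fin 2) (Fin 2) ℂ)) *
        bellDiag ((1 - f) / 3) ((1 - f) / 3) ((1 - f) / 3) f *
        (U ⊗ₖ (1 : Matrix (Fin 2) (Fin 2) ℂ))ᴴ)
      = 2 * ((1 - f) / 3) + 2 * Real.sqrt ((1 - f) / 3 * f) := by
  set a : ℝ := (1 - f) / 3 with ha_def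
  have ha : 0 ≤ a := div_nonneg (by linarith) (by norm_num)
  set K := U ⊗ₖ (1 : Matrix (Fin 2) (Fin 2) ℂ) with hK_def
  have hKH : Kᴴ = Uᴴ ⊗ₖ 1 := kron_one_conjT U
  have hKK : Kᴴ * K = 1 := by
    rw [hKH, hK_def, ← Matrix.mul_kronecker_mul, hU, Matrix.one_mul, Matrix.one_kronecker_one]
  have hKK' : K * Kᴴ = 1 := mul_eq_one_comm.mp hKK
  set P' := K * Pm * Kᴴ with hP'_def
  have hP'h : P'ᴴ = P' := by
    rw [hP'_def, Matrix.conjTranspose_mul, Matrix.conjTranspose_mul,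
      Matrix.conjTranspose_conjTranspose, Pm_herm, Matrix.mul_assoc]
  have hP'2 : P' * P' = P' := by
    rw [hP'_def]
    simp only [Matrix.mul_assoc]
    rw [← Matrix.mul_assoc Kᴴ K, hKK, Matrix.one_mul, ← Matrix.mul_assoc Pm Pm, Pm_idem]
  have h0 : Pm * (K * Pm) = 0 := by
    rw [Pm, _root_.mul_vecMulVec, _root_.vecMulVec_mul_vecMulVec, orth_psi U ht, zero_smul]
  have hPmP' : Pm * P' = 0 := by
    rw [hP'_def, ← Matrix.mul_assoc, h0, Matrix.zero_mul]
  have hP'Pm : P' * Pm = 0 := by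
    have h := congrArg Matrix.conjTranspose hPmP'
    rwa [Matrix.conjTranspose_mul, hP'h, Pm_herm, Matrix.conjTranspose_zero] at h
  have htrP' : P'.trace = 1 := by
    rw [hP'_def, Matrix.trace_mul_cycle, hKK, Matrix.one_mul, trace_Pm]
  set sa : ℂ := ((Real.sqrt a : ℝ) : ℂ) with hsa_def
  set sf : ℂ := ((Real.sqrt f : ℝ) : ℂ) with hsf_def
  have h1 : sa * sa = (a : ℂ) := by
    rw [hsa_def, ← Complex.ofReal_mul, Real.mul_self_sqrt ha]
  have h2 : sf * sf = (f : ℂ) := by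
    rw [hsf_def, ← Complex.ofReal_mul, Real.mul_self_sqrt hf0]
  have h3 : ((Real.sqrt (a * f) : ℝ) : ℂ) = sa * sf := by
    rw [Real.sqrt_mul ha f]; push_cast; rfl
  set ρ := bellDiag a a a f with hρdef
  have hρ : ρ = (a : ℂ) • 1 + ((f : ℂ) - a) • Pm := bell_decomp a f
  set S := sa • (1 : Matrix (Fin 2 × Fin 2) (Fin 2 × Fin 2) ℂ) + (sf - sa) • Pm with hS_def
  have hS2 : S * S = ρ := by
    rw [hρ, hS_def, ← h1, ← h2]
    simp only [Matrix.add_mul, Matrix.mul_add, smul_mul_assoc, mul_smul_comm,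
      Matrix.one_mul, Matrix.mul_one, Pm_idem, smul_smul]
    module
  have hSpsd : S.PosSemidef := by
    have e1 : S = sa • (1 - Pm) + sf • Pm := by rw [hS_def]; module
    rw [e1, hsa_def, hsf_def]
    refine Matrix.PosSemidef.add (psd_smul_proj ?_ ?_ (Real.sqrt_nonneg a))
      (psd_smul_proj Pm_herm Pm_idem (Real.sqrt_nonneg f))
    · rw [Matrix.conjTranspose_sub, Matrix.conjTranspose_one, Pm_herm]
    · simp only [Matrix.sub_mul, Matrix.mul_sub, Matrix.one_mul, Matrix.mul_one, Pm_idem]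
      abel
  have hmsρ : msqrt ρ = S := msqrt_eq hSpsd hS2
  set σ := K * ρ * Kᴴ with hσ_def
  have hσ : σ = (a : ℂ) • 1 + ((f : ℂ) - a) • P' := by
    rw [hσ_def, hρ, hP'_def]
    simp only [Matrix.mul_add, Matrix.add_mul, Matrix.mul_smul, Matrix.smul_mul,
      Matrix.mul_one]
    rw [hKK', Matrix.mul_assoc]
  have hQh : (Pm + P')ᴴ = Pm + P' := by
    rw [Matrix.conjTranspose_add, Pm_herm, hP'h]
  have hQidem : (Pm + P') * (Pm + P') = Pm + P' := by
    rw [Matrix.add_mul, Matrix.mul_add, Matrix.mul_add, Pm_idem, hP'2, hPmP', hP'Pm]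
    abel
  set R := (sa * sa) • (1 : Matrix (Fin 2 × Fin 2) (Fin 2 × Fin 2) ℂ)
    + (sa * sf - sa * sa) • (Pm + P') with hR_def
  have hT : S * σ * S = ((a:ℂ) * (a:ℂ)) • 1 + ((a:ℂ) * ((f:ℂ) - (a:ℂ))) • Pm
      + ((a:ℂ) * ((f:ℂ) - (a:ℂ))) • P' := by
    rw [hσ, hS_def, ← h1, ← h2]
    simp only [Matrix.add_mul, Matrix.mul_add, smul_mul_assoc, mul_smul_comm,
      Matrix.one_mul, Matrix.mul_one, Pm_idem, hPmP', hP'Pm, smul_smul, smul_zero,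
      mul_zero, zero_mul, Matrix.zero_mul, Matrix.mul_zero, add_zero, zero_add]
    module
  have hR2 : R * R = S * σ * S := by
    rw [hT, hR_def, ← h1, ← h2]
    simp only [Matrix.add_mul, Matrix.mul_add, smul_mul_assoc, mul_smul_comm,
      Matrix.one_mul, Matrix.mul_one, Pm_idem, hP'2, hPmP', hP'Pm, smul_smul, smul_zero,
      mul_zero, zero_mul, Matrix.zero_mul, Matrix.mul_zero, add_zero, zero_add]
    module
  have hRpsd : R.PosSemidef := by
    have e1 : R = ((a : ℝ) : ℂ) • (1 - (Pm + P')) + ((Real.sqrt (a * f) : ℝ) : ℂ) • (Pm + P') := by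
      rw [hR_def, h3, ← h1]; module
    rw [e1]
    refine Matrix.PosSemidef.add (psd_smul_proj ?_ ?_ ha)
      (psd_smul_proj hQh hQidem (Real.sqrt_nonneg _))
    · rw [Matrix.conjTranspose_sub, Matrix.conjTranspose_one, hQh]
    · simp only [Matrix.sub_mul, Matrix.mul_sub, Matrix.one_mul, Matrix.mul_one, hQidem]
      abel
  have hmsT : msqrt (S * σ * S) = R := msqrt_eq hRpsd hR2
  have htrR : R.trace = ((2 * a + 2 * Real.sqrt (a * f) : ℝ) : ℂ) := by
    rw [hR_def]
    simp only [Matrix.trace_add, Matrix.trace_smul, Matrix.trace_one, trace_Pm, htrP',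
      smul_eq_mul, Fintype.card_prod, Fintype.card_fin]
    rw [h1, ← h3]
    push_cast
    ring
  show ((msqrt (msqrt ρ * σ * msqrt ρ)).trace).re = _
  rw [hmsρ, hmsT, htrR, Complex.ofReal_re]

theorem discord_of_response_werner
    (f : ℝ) (hf0 : 0 ≤ f) (hf1 : f ≤ 1) :
    sInf {r : ℝ | ∃ U : Matrix (Fin 2) (Fin 2) ℂ, Uᴴ * U = 1 ∧ U.trace = 0 ∧
        r = 1 - sqrtFid (bellDiag ((1 - f) / 3) ((1 - f) / 3) ((1 - f) / 3) f)
          ((U ⊗ₖ (1 : Matrix (Fin 2) (Fin 2) ℂ)) *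
            bellDiag ((1 - f) / 3) ((1 - f) / 3) ((1 - f) / 3) f *
            (U ⊗ₖ (1 : Matrix (Fin 2) (Fin 2) ℂ))ᴴ)}
      = 1 - (2 / 3) * (1 - f) - (2 / Real.sqrt 3) * Real.sqrt (f * (1 - f)) := by
  have hU0 : (!![1, 0; 0, -1] : Matrix (Fin 2) (Fin 2) ℂ)ᴴ * !![1, 0; 0, -1] = 1 := by
    ext i j
    fin_cases i <;> fin_cases j <;>
      simp [Matrix.mul_apply, Fin.sum_univ_two, Matrix.one_apply, Matrix.conjTranspose_apply]
  have ht0 : (!![1, 0; 0, -1] : Matrix (Fin 2) (Fin 2) ℂ).trace = 0 := by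
    simp [Matrix.trace_fin_two]
  have hset : {r : ℝ | ∃ U : Matrix (Fin 2) (Fin 2) ℂ, Uᴴ * U = 1 ∧ U.trace = 0 ∧
      r = 1 - sqrtFid (bellDiag ((1 - f) / 3) ((1 - f) / 3) ((1 - f) / 3) f)
        ((U ⊗ₖ (1 : Matrix (Fin 2) (Fin 2) ℂ)) *
          bellDiag ((1 - f) / 3) ((1 - f) / 3) ((1 - f) / 3) f *
          (U ⊗ₖ (1 : Matrix (Fin 2) (Fin 2) ℂ))ᴴ)}
      = {1 - (2 * ((1 - f) / 3) + 2 * Real.sqrt ((1 - f) / 3 * f))} := by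
    ext r
    simp only [Set.mem_setOf_eq, Set.mem_singleton_iff]
    constructor
    · rintro ⟨U, hU, ht, rfl⟩
      rw [fid_const f hf0 hf1 U hU ht]
    · rintro rfl
      exact ⟨_, hU0, ht0, by rw [fid_const f hf0 hf1 _ hU0 ht0]⟩
  rw [hset, csInf_singleton]
  have hsq : Real.sqrt ((1 - f) / 3 * f) = Real.sqrt (f * (1 - f)) / Real.sqrt 3 := by
    rw [show (1 - f) / 3 * f = f * (1 - f) / 3 by ring,
      Real.sqrt_div (mul_nonneg hf0 (by linarith)) 3]
  rw [hsq]
  ring
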